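/- Let R be a commutative ring and let a, b, c, d, e, f, d′, e′, f′, d″, e″, f″, x, y be elements of R such that a·x² + b·x·y + c·y² + d·x + e·y + f = 0, d′·x + e′·y + f′ = 0, and d″·x + e″·y + f″ = 0. Then, writing (e′f″) = e′·f″ − e″·f′, (d′f″) = d′·f″ − d″·f′, (d′e″) = d′·e″ − d″·e′, one has a·(e′f″)² − b·(e′f″)·(d′f″) + c·(d′f″)² + (d′e″)·(d·(e′f″) − e·(d′f″) + f·(d′e″)) = 0. -/
import Mathlib


/-- Bézout's 1779 (second method) resultant of a quadratic and two linear equations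
in two unknowns: any common solution `(x, y)` satisfies the displayed equation of
condition built from the 2×2 determinants `(e′f″)`, `(d′f″)`, `(d′e″)` and the 3×3
determinant `d·(e′f″) − e·(d′f″) + f·(d′e″)`. -/
theorem bezout_condition_quadratic_two_linear {R : Type*} [CommRing R]
    (a b c d e f d' e' f' d'' e'' f'' x y : R)
    (h1 : a * x ^ 2 + b * x * y + c * y ^ 2 + d * x + e * y + f = 0)
    (h2 : d' * x + e' * y + f' = 0)
    (h3 : d'' * x + e'' * y + f'' = 0) :
    a * (e' * f'' - e'' * f') ^ 2
      - b * (e' * f'' - e'' * f') * (d' * f'' - d'' * f')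
      + c * (d' * f'' - d'' * f') ^ 2
      + (d' * e'' - d'' * e') *
        (d * (e' * f'' - e'' * f') - e * (d' * f'' - d'' * f')
          + f * (d' * e'' - d'' * e')) = 0 := by
  have hx : (d' * e'' - d'' * e') * x = e' * f'' - e'' * f' := by
    linear_combination e'' * h2 - e' * h3
  have hy : (d' * e'' - d'' * e') * y = -(d' * f'' - d'' * f') := by
    linear_combination d' * h3 - d'' * h2
  linear_combination (d' * e'' - d'' * e') ^ 2 * h1
    - (a * ((e' * f'' - e'' * f') + (d' * e'' - d'' * e') * x)
        - b * (d' * f'' - d'' * f') + d * (d' * e'' - d'' * e')) * hx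
    + (c * ((d' * f'' - d'' * f') - (d' * e'' - d'' * e') * y)
        - b * (d' * e'' - d'' * e') * x - e * (d' * e'' - d'' * e')) * hy
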